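/- Let S be a finite-dimensional unital Banach algebra, Φ₀ ∈ B(S) a bounded linear map, and (Λ₀, M₀, κ₀) a nondegenerate solution of the Schwinger-Dyson equation: 1 + (Λ₀ + Φ₀(M₀))M₀ = 0, where κ₀ is the inverse of the map x ↦ M₀⁻¹x − Φ₀(x)M₀. Fix ε and δ with 0 ≤ ε ≤ 1/(4‖κ₀‖⋆‖Φ₀‖⋆) and 0 ≤ δ ≤ ε/(4‖κ₀‖⋆‖M₀‖⋆), where x⋆ = max(x,1). Then for every Λ with ‖Λ − Λ₀‖ ≤ δ there exists a unique M with ‖M − M₀‖ ≤ ε such that 1 + (Λ + Φ₀(M))M = 0. -/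

import Mathlib

set_option maxHeartbeats 1000000 in

theorem stmt_17 {S : Type*} [NormedRing S] [NormOneClass S] [NormedAlgebra ℂ S]
    [FiniteDimensional ℂ S]
    (Φ₀ : S →L[ℂ] S) (Λ₀ M₀ : S) (κ₀ : S →L[ℂ] S)
    (hM : IsUnit M₀)
    (hSD : 1 + (Λ₀ + Φ₀ M₀) * M₀ = 0)
    (hκ₁ : ∀ x : S, κ₀ (Ring.inverse M₀ * x - Φ₀ x * M₀) = x)
    (hκ₂ : ∀ x : S, Ring.inverse M₀ * κ₀ x - Φ₀ (κ₀ x) * M₀ = x)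
    (ε δ : ℝ)
    (hε : 0 ≤ ε) (hε' : ε ≤ 1 / (4 * max ‖κ₀‖ 1 * max ‖Φ₀‖ 1))
    (hδ : 0 ≤ δ) (hδ' : δ ≤ ε / (4 * max ‖κ₀‖ 1 * max ‖M₀‖ 1)) :
    ∀ Λ : S, ‖Λ - Λ₀‖ ≤ δ →
      ∃! M : S, ‖M - M₀‖ ≤ ε ∧ 1 + (Λ + Φ₀ M) * M = 0 := by
  intro Λ hΛ
  classical
  haveI : CompleteSpace S := FiniteDimensional.complete ℂ S
  set K : ℝ := max ‖κ₀‖ 1 with hKdef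
  set P : ℝ := max ‖Φ₀‖ 1 with hPdef
  set N : ℝ := max ‖M₀‖ 1 with hNdef
  have hK1 : (1:ℝ) ≤ K := le_max_right _ _
  have hP1 : (1:ℝ) ≤ P := le_max_right _ _
  have hN1 : (1:ℝ) ≤ N := le_max_right _ _
  have hKκ : ‖κ₀‖ ≤ K := le_max_left _ _
  have hPΦ : ‖Φ₀‖ ≤ P := le_max_left _ _
  have hNM : ‖M₀‖ ≤ N := le_max_left _ _
  have hKP : (0:ℝ) < 4 * K * P := by nlinarith
  have hKN : (0:ℝ) < 4 * K * N := by nlinarith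
  have hKPε : K * P * ε ≤ 1/4 := by
    rw [le_div_iff₀ hKP] at hε'; nlinarith
  have hKNδ : K * N * δ ≤ ε / 4 := by
    rw [le_div_iff₀ hKN] at hδ'; nlinarith
  have hε1 : ε ≤ 1 := by nlinarith
  set Θ : S := Λ - Λ₀ with hΘdef
  have hΘ : ‖Θ‖ ≤ δ := hΛ
  set Q : S → S := fun x => κ₀ (Θ * M₀ + Θ * x + Φ₀ x * x) with hQdef
  have h0 : (Λ₀ + Φ₀ M₀) * M₀ = -1 := by
    have h := hSD; rwa [add_comm, add_eq_zero_iff_eq_neg] at h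
  -- the key algebraic identity
  have hinv : Ring.inverse M₀ = -(Λ₀ + Φ₀ M₀) := by
    have h1 : M₀ * Ring.inverse M₀ = 1 := Ring.mul_inverse_cancel _ hM
    calc Ring.inverse M₀ = -(-1 * Ring.inverse M₀) := by noncomm_ring
      _ = -((Λ₀ + Φ₀ M₀) * M₀ * Ring.inverse M₀) := by rw [h0]
      _ = -((Λ₀ + Φ₀ M₀) * (M₀ * Ring.inverse M₀)) := by rw [mul_assoc]
      _ = -(Λ₀ + Φ₀ M₀) := by rw [h1, mul_one]
  have key : ∀ x : S, 1 + (Λ + Φ₀ (M₀ + x)) * (M₀ + x)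
      = (Θ * M₀ + Θ * x + Φ₀ x * x) - (Ring.inverse M₀ * x - Φ₀ x * M₀) := by
    intro x
    rw [map_add, hinv, hΘdef]
    rw [← sub_eq_zero]
    have expand : 1 + (Λ + (Φ₀ M₀ + Φ₀ x)) * (M₀ + x) -
        ((Λ - Λ₀) * M₀ + (Λ - Λ₀) * x + Φ₀ x * x - (-(Λ₀ + Φ₀ M₀) * x - Φ₀ x * M₀))
        = 1 + (Λ₀ + Φ₀ M₀) * M₀ := by noncomm_ring
    rw [expand, hSD]
  have hiff : ∀ x : S, (1 + (Λ + Φ₀ (M₀ + x)) * (M₀ + x) = 0) ↔ Q x = x := by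
    intro x
    constructor
    · intro h
      have h2 := key x
      rw [h] at h2
      have h3 : Ring.inverse M₀ * x - Φ₀ x * M₀ = Θ * M₀ + Θ * x + Φ₀ x * x :=
        (sub_eq_zero.mp h2.symm).symm
      have : Q x = κ₀ (Ring.inverse M₀ * x - Φ₀ x * M₀) := by rw [h3]
      rw [this, hκ₁]
    · intro h
      have h2 := hκ₂ (Θ * M₀ + Θ * x + Φ₀ x * x)
      have hQx : κ₀ (Θ * M₀ + Θ * x + Φ₀ x * x) = x := h
      rw [hQx] at h2
      rw [key x, h2, sub_self]
  -- norm estimates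
  have hball : ∀ x : S, ‖x‖ ≤ ε → ‖Q x‖ ≤ ε := by
    intro x hx
    have hxnn : (0:ℝ) ≤ ‖x‖ := norm_nonneg x
    have h1 : ‖Q x‖ ≤ ‖κ₀‖ * ‖Θ * M₀ + Θ * x + Φ₀ x * x‖ := κ₀.le_opNorm _
    have h2 : ‖Θ * M₀ + Θ * x + Φ₀ x * x‖ ≤ δ * N + δ * ε + P * ε * ε := by
      calc ‖Θ * M₀ + Θ * x + Φ₀ x * x‖ ≤ ‖Θ * M₀ + Θ * x‖ + ‖Φ₀ x * x‖ := norm_add_le _ _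
        _ ≤ ‖Θ * M₀‖ + ‖Θ * x‖ + ‖Φ₀ x * x‖ := by gcongr; exact norm_add_le _ _
        _ ≤ ‖Θ‖ * ‖M₀‖ + ‖Θ‖ * ‖x‖ + ‖Φ₀ x‖ * ‖x‖ := by
            gcongr <;> exact norm_mul_le _ _
        _ ≤ ‖Θ‖ * ‖M₀‖ + ‖Θ‖ * ‖x‖ + (‖Φ₀‖ * ‖x‖) * ‖x‖ := by
            gcongr
            exact Φ₀.le_opNorm x
        _ ≤ δ * N + δ * ε + P * ε * ε := by
            gcongr <;> first
              | exact hΘ | exact hNM | exact hx | exact hPΦ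
              | exact hxnn | exact norm_nonneg _ | linarith
    have h3 : ‖Q x‖ ≤ K * (δ * N + δ * ε + P * ε * ε) := by
      calc ‖Q x‖ ≤ ‖κ₀‖ * ‖Θ * M₀ + Θ * x + Φ₀ x * x‖ := h1
        _ ≤ K * (δ * N + δ * ε + P * ε * ε) := by
            apply mul_le_mul hKκ h2 (norm_nonneg _) (by linarith)
    have e1 : K * (δ * N) ≤ ε / 4 := by nlinarith
    have e2 : K * (δ * ε) ≤ ε / 4 := by nlinarith
    have e3 : K * (P * ε * ε) ≤ ε / 4 := by nlinarith
    nlinarith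
  have hcontr : ∀ x y : S, ‖x‖ ≤ ε → ‖y‖ ≤ ε → ‖Q x - Q y‖ ≤ 3/4 * ‖x - y‖ := by
    intro x y hx hy
    have hd : (0:ℝ) ≤ ‖x - y‖ := norm_nonneg _
    have hz : Q x - Q y = κ₀ (Θ * (x - y) + (Φ₀ (x - y) * x + Φ₀ y * (x - y))) := by
      rw [hQdef]
      simp only
      rw [← map_sub]
      congr 1
      rw [map_sub]
      noncomm_ring
    have h1 : ‖Q x - Q y‖ ≤ ‖κ₀‖ * ‖Θ * (x - y) + (Φ₀ (x - y) * x + Φ₀ y * (x - y))‖ := by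
      rw [hz]; exact κ₀.le_opNorm _
    have h2 : ‖Θ * (x - y) + (Φ₀ (x - y) * x + Φ₀ y * (x - y))‖
        ≤ δ * ‖x - y‖ + (P * ‖x - y‖ * ε + P * ε * ‖x - y‖) := by
      calc ‖Θ * (x - y) + (Φ₀ (x - y) * x + Φ₀ y * (x - y))‖
          ≤ ‖Θ * (x - y)‖ + (‖Φ₀ (x - y) * x‖ + ‖Φ₀ y * (x - y)‖) :=
            (norm_add_le _ _).trans (by gcongr; exact norm_add_le _ _)
        _ ≤ ‖Θ‖ * ‖x - y‖ + (‖Φ₀ (x - y)‖ * ‖x‖ + ‖Φ₀ y‖ * ‖x - y‖) := by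
            gcongr <;> exact norm_mul_le _ _
        _ ≤ δ * ‖x - y‖ + ((‖Φ₀‖ * ‖x - y‖) * ε + (‖Φ₀‖ * ‖y‖) * ‖x - y‖) := by
            gcongr <;> first | exact hΘ | exact hx | exact Φ₀.le_opNorm _ | positivity
        _ ≤ δ * ‖x - y‖ + (P * ‖x - y‖ * ε + P * ε * ‖x - y‖) := by
            gcongr <;> first | exact hPΦ | exact hy | exact norm_nonneg _ | positivity
    have h3 : ‖Q x - Q y‖ ≤ K * (δ * ‖x - y‖ + (P * ‖x - y‖ * ε + P * ε * ‖x - y‖)) :=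
      h1.trans (mul_le_mul hKκ h2 (norm_nonneg _) (by linarith))
    have e1 : K * δ ≤ 1/4 := by nlinarith
    have e2 : K * (P * ε) ≤ 1/4 := by nlinarith
    nlinarith [mul_nonneg (mul_nonneg (by linarith : (0:ℝ) ≤ K) hδ) hd,
      mul_nonneg hd (by nlinarith : (0:ℝ) ≤ K * (P * ε))]
  -- Banach fixed point on the closed ball
  have hmem : ∀ z : Metric.closedBall (0:S) ε, ‖(z : S)‖ ≤ ε := by
    intro z
    have := z.2
    rwa [Metric.mem_closedBall, dist_zero_right] at this
  haveI : Nonempty (Metric.closedBall (0:S) ε) :=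
    ⟨⟨0, Metric.mem_closedBall_self hε⟩⟩
  haveI : CompleteSpace (Metric.closedBall (0:S) ε) :=
    IsClosed.completeSpace_coe (hs := Metric.isClosed_closedBall)
  set f : Metric.closedBall (0:S) ε → Metric.closedBall (0:S) ε :=
    fun z => ⟨Q z.1, by
      rw [Metric.mem_closedBall, dist_zero_right]
      exact hball z.1 (hmem z)⟩ with hfdef
  have hlip : LipschitzWith (3/4 : NNReal) f := by
    apply LipschitzWith.of_dist_le_mul
    intro a b
    rw [Subtype.dist_eq, Subtype.dist_eq, dist_eq_norm, dist_eq_norm]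
    have h := hcontr a.1 b.1 (hmem a) (hmem b)
    have hc : ((3/4 : NNReal) : ℝ) = 3/4 := by norm_num
    rw [hc]
    exact h
  have hcw : ContractingWith (3/4 : NNReal) f := ⟨by rw [← NNReal.coe_lt_coe]; norm_num, hlip⟩
  set x₀ : Metric.closedBall (0:S) ε := ContractingWith.fixedPoint f hcw with hx₀def
  have hfix : f x₀ = x₀ := hcw.fixedPoint_isFixedPt
  have hQfix : Q x₀.1 = x₀.1 := congrArg Subtype.val hfix
  refine ⟨M₀ + x₀.1, ⟨?_, ?_⟩, ?_⟩
  · rw [add_sub_cancel_left]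
    exact hmem x₀
  · exact (hiff x₀.1).mpr hQfix
  · rintro M' ⟨hM'ε, hM'SD⟩
    have hM'eq : M' = M₀ + (M' - M₀) := by abel
    have hx' : ‖M' - M₀‖ ≤ ε := hM'ε
    rw [hM'eq] at hM'SD
    have hQx' : Q (M' - M₀) = M' - M₀ := (hiff (M' - M₀)).mp hM'SD
    have hle : ‖(M' - M₀) - x₀.1‖ ≤ 3/4 * ‖(M' - M₀) - x₀.1‖ := by
      calc ‖(M' - M₀) - x₀.1‖ = ‖Q (M' - M₀) - Q x₀.1‖ := by rw [hQx', hQfix]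
        _ ≤ 3/4 * ‖(M' - M₀) - x₀.1‖ := hcontr _ _ hx' (hmem x₀)
    have hzero : ‖(M' - M₀) - x₀.1‖ = 0 := le_antisymm (by linarith) (norm_nonneg _)
    have : (M' - M₀) - x₀.1 = 0 := norm_eq_zero.mp hzero
    have : M' - M₀ = x₀.1 := by rwa [sub_eq_zero] at this
    rw [hM'eq, this]
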